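/- Let X be a loopless graph on n vertices and τ the least eigenvalue of its adjacency matrix. For an independent set S of size s, define d̄_S = (1/s)·Σ_{i∈S} d_i and k_S = 2·d̄_S − (1/n)·Σ_{i∈V} d_i. If k_S > τ, then s ≤ n·(−τ)/(k_S − τ). -/

import Mathlib

open Matrix Finset

/-- Ratio bound for non-regular loopless graphs: if `k_S = 2·d̄_S − (average degree) > τ`
then `s ≤ n·(−τ)/(k_S − τ)`. -/
theorem stmt2 (n : ℕ) (hn : 0 < n)
    (A : Matrix (Fin n) (Fin n) ℝ) (hsym : A.IsSymm)
    (h01 : ∀ i j, A i j = 0 ∨ A i j = 1) (hloop : ∀ i, A i i = 0)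
    (τ : ℝ)
    (hτeig : ∃ v : Fin n → ℝ, v ≠ 0 ∧ A.mulVec v = τ • v)
    (hτmin : ∀ (μ : ℝ) (v : Fin n → ℝ), v ≠ 0 → A.mulVec v = μ • v → τ ≤ μ)
    (S : Finset (Fin n)) (hSne : S.Nonempty)
    (hind : ∀ i ∈ S, ∀ j ∈ S, i ≠ j → A i j = 0)
    (dbar kS : ℝ)
    (hdbar : dbar = (∑ i ∈ S, ∑ j, A i j) / S.card)
    (hkS : kS = 2 * dbar - (∑ i, ∑ j, A i j) / n)
    (hgt : kS > τ) :
    (S.card : ℝ) ≤ n * (-τ) / (kS - τ) := by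
  have : NeZero n := ⟨hn.ne'⟩
  have hA : A.IsHermitian := by
    rwa [Matrix.IsHermitian, conjTranspose_eq_transpose_of_trivial]
  set B : Matrix (Fin n) (Fin n) ℝ := A - τ • 1 with hBdef
  have hB : B.IsHermitian := hA.sub (by simp [Matrix.IsHermitian])
  -- all eigenvalues of B are nonnegative
  have heig : ∀ i, 0 ≤ hB.eigenvalues i := by
    intro i
    set v : Fin n → ℝ := ⇑(hB.eigenvectorBasis i) with hv
    have hvne : v ≠ 0 := fun h => hB.eigenvectorBasis.orthonormal.ne_zero i (by ext j; simpa using congrFun h j)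
    have hmv : B *ᵥ v = hB.eigenvalues i • v := hB.mulVec_eigenvectorBasis i
    have hAv : A *ᵥ v = (hB.eigenvalues i + τ) • v := by
      have : A *ᵥ v = B *ᵥ v + τ • v := by
        rw [hBdef, sub_mulVec, smul_mulVec, one_mulVec]
        ring_nf
      rw [this, hmv, add_smul]
    have := hτmin _ v hvne hAv
    linarith
  have hPSD : B.PosSemidef := hB.posSemidef_iff_eigenvalues_nonneg.mpr heig
  -- quadratic form bound
  have hquad : ∀ x : Fin n → ℝ, τ * (x ⬝ᵥ x) ≤ x ⬝ᵥ (A *ᵥ x) := by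
    intro x
    have h := hPSD.dotProduct_mulVec_nonneg x
    have hb : B *ᵥ x = A *ᵥ x - τ • x := by
      rw [hBdef, sub_mulVec, smul_mulVec, one_mulVec]
    rw [hb] at h
    simp only [star_trivial, dotProduct_sub, dotProduct_smul, smul_eq_mul] at h
    linarith
  -- the test vector
  set s : ℝ := (S.card : ℝ) with hs
  have hspos : 0 < s := by rw [hs]; exact_mod_cast Finset.card_pos.mpr hSne
  have hnpos : (0:ℝ) < n := by exact_mod_cast hn
  set χ : Fin n → ℝ := fun i => if i ∈ S then 1 else 0 with hχ
  set x : Fin n → ℝ := fun i => (n : ℝ) * χ i - s with hx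
  set e : ℝ := ∑ i, ∑ j, A i j with he
  set dS : ℝ := ∑ i ∈ S, ∑ j, A i j with hdS
  have hχsum : ∀ f : Fin n → ℝ, ∑ i, χ i * f i = ∑ i ∈ S, f i := by
    intro f
    simp [hχ, ite_mul]
  have hχsum' : ∀ f : Fin n → ℝ, ∑ i, f i * χ i = ∑ i ∈ S, f i := by
    intro f
    simp [hχ, mul_ite]
  have hAsymm : ∀ i j, A i j = A j i := by
    intro i j
    conv_lhs => rw [← hsym]
    rfl
  -- the three bilinear pieces
  have hp0 : ∑ i, ∑ j, χ i * A i j * χ j = 0 := by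
    have key : ∑ i, ∑ j, χ i * A i j * χ j = ∑ i ∈ S, ∑ j ∈ S, A i j := by
      simp [hχ, ite_mul, mul_ite]
    rw [key]
    apply Finset.sum_eq_zero
    intro i hi
    apply Finset.sum_eq_zero
    intro j hj
    by_cases hij : i = j
    · subst hij; exact hloop i
    · exact hind i hi j hj hij
  have hp1 : ∑ i, ∑ j, χ i * A i j = dS := by
    rw [hdS]
    simp [hχ, ite_mul]
  have hp2 : ∑ i, ∑ j, A i j * χ j = dS := by
    rw [Finset.sum_comm, hdS]
    simp only [fun i j => hAsymm i j]
    simp [hχ, mul_ite]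
  -- compute the quadratic form on x
  have hq := hquad x
  have hxAx : x ⬝ᵥ (A *ᵥ x)
      = (n:ℝ)^2 * (∑ i, ∑ j, χ i * A i j * χ j)
        - (n:ℝ) * s * (∑ i, ∑ j, χ i * A i j)
        - (n:ℝ) * s * (∑ i, ∑ j, A i j * χ j)
        + s^2 * e := by
    simp only [dotProduct, mulVec, dotProduct, Finset.mul_sum, Finset.sum_mul, he]
    rw [← Finset.sum_sub_distrib, ← Finset.sum_sub_distrib, ← Finset.sum_add_distrib]
    apply Finset.sum_congr rfl
    intro i _
    rw [← Finset.sum_sub_distrib, ← Finset.sum_sub_distrib, ← Finset.sum_add_distrib]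
    apply Finset.sum_congr rfl
    intro j _
    simp only [hx]
    ring
  rw [hp0, hp1, hp2] at hxAx
  have hxx : x ⬝ᵥ x = (n:ℝ)^2 * s - 2 * (n:ℝ) * s * s + s^2 * n := by
    simp only [dotProduct]
    have : ∀ i, x i * x i = (n:ℝ)^2 * (χ i * χ i) - 2*(n:ℝ)*s*χ i + s^2 := by
      intro i; simp only [hx]; ring
    simp only [this]
    rw [Finset.sum_add_distrib, Finset.sum_sub_distrib]
    have hc1 : ∑ i : Fin n, χ i * χ i = s := by
      rw [hχsum' χ]
      simp [hχ, hs]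
    have hc2 : ∑ i : Fin n, (2*(n:ℝ)*s*χ i) = 2*(n:ℝ)*s*s := by
      rw [← Finset.mul_sum]
      have : ∑ i : Fin n, χ i = s := by simp [hχ, hs]
      rw [this]
    rw [← Finset.mul_sum, hc1, hc2]
    simp [mul_comm]
  rw [hxAx, hxx] at hq
  -- relate dS, e to dbar, kS
  have hdS' : dS = s * dbar := by
    rw [hdbar]
    field_simp
  -- final algebra
  have hden : 0 < kS - τ := by linarith
  rw [le_div_iff₀ hden]
  have hkS' : kS * n = 2 * dbar * n - e := by
    rw [hkS]
    field_simp
  nlinarith [mul_pos hspos hnpos, mul_pos (mul_pos hspos hspos) hnpos, sq_nonneg s]
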